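/- Let K be a field, a, b positive integers with g = gcd(a,b) ≥ 2, let A be a set with {0,g} ⊆ A ⊆ {0,1,…,g} and gcd(A) = 1, and set I = I_A. For k ≥ 1 say that r(I^k) = 1 if (I^k)² = (x^{ka}, y^{kb})·I^k and I^k ≠ (x^{ka}, y^{kb}). Then the following are equivalent: (a) r(I^k) = 1 for some k ≥ 1; (b) {0, 1, g−1, g} ⊆ A; (c) r(I^k) = 1 for every k ≥ max(1, g−2). Moreover (for an arbitrary set A with {0,g} ⊆ A ⊆ {0,1,…,g}, not necessarily with gcd(A) = 1), if r(I_A^{k₀}) = 1 for some k₀ ≥ 1, then r(I_A^k) = 1 for all k ≥ k₀. -/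

import Mathlib

open MvPolynomial Pointwise

noncomputable def mono (K : Type*) [Field K] (c d : ℕ) : MvPolynomial (Fin 2) K :=
  X 0 ^ c * X 1 ^ d

noncomputable def Jab (K : Type*) [Field K] (a b : ℕ) : Ideal (MvPolynomial (Fin 2) K) :=
  Ideal.span {mono K a 0, mono K 0 b}

noncomputable def IA (K : Type*) [Field K] (a b : ℕ) (A : Finset ℕ) :
    Ideal (MvPolynomial (Fin 2) K) :=
  Ideal.span ((fun i : ℕ =>
    mono K (i * (a / Nat.gcd a b)) (b - i * (b / Nat.gcd a b))) '' (A : Set ℕ))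

/-- exponent of the generator at parameter `u` on level `N`. -/
noncomputable def expo (a b N u : ℕ) : Fin 2 →₀ ℕ :=
  Finsupp.single 0 (u * (a / Nat.gcd a b)) +
    Finsupp.single 1 ((N * Nat.gcd a b - u) * (b / Nat.gcd a b))

noncomputable def SpanN (K : Type*) [Field K] (a b N : ℕ) (U : Set ℕ) :
    Ideal (MvPolynomial (Fin 2) K) :=
  Ideal.span ((fun s => monomial s (1:K)) '' (expo a b N '' U))

/-- the `k`-fold sumset of `A`. -/
def SK (A : Set ℕ) : ℕ → Set ℕ
  | 0 => {0}
  | k+1 => SK A k + A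

lemma mono_eq (K : Type*) [Field K] (c d : ℕ) :
    mono K c d = monomial (Finsupp.single 0 c + Finsupp.single 1 d) 1 := by
  rw [mono, X_pow_eq_monomial, X_pow_eq_monomial, monomial_mul, one_mul]

lemma expo_apply0 (a b N u : ℕ) : expo a b N u 0 = u * (a / Nat.gcd a b) := by
  simp [expo, Finsupp.single_apply]

lemma expo_apply1 (a b N u : ℕ) :
    expo a b N u 1 = (N * Nat.gcd a b - u) * (b / Nat.gcd a b) := by
  simp [expo, Finsupp.single_apply]

lemma expo_le_same {a b : ℕ} (hα : 0 < a / Nat.gcd a b) (hβ : 0 < b / Nat.gcd a b)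
    {N u v : ℕ} (hu : u ≤ N * Nat.gcd a b) (hv : v ≤ N * Nat.gcd a b)
    (h : expo a b N v ≤ expo a b N u) : v = u := by
  have h0 := h 0
  have h1 := h 1
  rw [expo_apply0, expo_apply0] at h0
  rw [expo_apply1, expo_apply1] at h1
  have hvu : v ≤ u := Nat.le_of_mul_le_mul_right h0 hα
  have h1' : N * Nat.gcd a b - v ≤ N * Nat.gcd a b - u := Nat.le_of_mul_le_mul_right h1 hβ
  set M := N * Nat.gcd a b
  omega

lemma expo_add {a b N N' u v : ℕ} (hu : u ≤ N * Nat.gcd a b) (hv : v ≤ N' * Nat.gcd a b) :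
    expo a b N u + expo a b N' v = expo a b (N + N') (u + v) := by
  have key : N * Nat.gcd a b - u + (N' * Nat.gcd a b - v) =
      (N + N') * Nat.gcd a b - (u + v) := by
    have : (N + N') * Nat.gcd a b = N * Nat.gcd a b + N' * Nat.gcd a b := add_mul _ _ _
    set M1 := N * Nat.gcd a b
    set M2 := N' * Nat.gcd a b
    omega
  rw [expo, expo, expo, add_add_add_comm, ← Finsupp.single_add, ← Finsupp.single_add,
    ← add_mul, ← add_mul, key]

lemma SpanN_mul (K : Type*) [Field K] {a b N N' : ℕ} {U V : Set ℕ}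
    (hU : ∀ u ∈ U, u ≤ N * Nat.gcd a b) (hV : ∀ v ∈ V, v ≤ N' * Nat.gcd a b) :
    SpanN K a b N U * SpanN K a b N' V = SpanN K a b (N + N') (U + V) := by
  rw [SpanN, SpanN, SpanN, Ideal.span_mul_span']
  congr 1
  ext z
  constructor
  · rintro ⟨x, ⟨-, ⟨u, hu, rfl⟩, rfl⟩, y, ⟨-, ⟨v, hv, rfl⟩, rfl⟩, rfl⟩
    refine ⟨expo a b (N+N') (u+v), ⟨u+v, Set.add_mem_add hu hv, rfl⟩, ?_⟩
    show monomial _ _ = monomial _ 1 * monomial _ 1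
    rw [monomial_mul, one_mul, expo_add (hU u hu) (hV v hv)]
  · rintro ⟨-, ⟨-, ⟨u, hu, v, hv, rfl⟩, rfl⟩, rfl⟩
    refine ⟨monomial (expo a b N u) 1, ⟨expo a b N u, ⟨u, hu, rfl⟩, rfl⟩,
      monomial (expo a b N' v) 1, ⟨expo a b N' v, ⟨v, hv, rfl⟩, rfl⟩, ?_⟩
    show monomial _ 1 * monomial _ 1 = monomial _ _
    rw [monomial_mul, one_mul, expo_add (hU u hu) (hV v hv)]

lemma SK_zero (A : Set ℕ) : SK A 0 = {0} := rfl
lemma SK_succ (A : Set ℕ) (k : ℕ) : SK A (k+1) = SK A k + A := rfl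

lemma SK_le {A : Set ℕ} {g : ℕ} (hA : ∀ x ∈ A, x ≤ g) :
    ∀ k, ∀ s ∈ SK A k, s ≤ k * g := by
  intro k
  induction k with
  | zero => intro s hs; rw [SK_zero, Set.mem_singleton_iff] at hs; simp [hs]
  | succ n ih =>
    intro s hs
    rw [SK_succ] at hs
    obtain ⟨x, hx, y, hy, rfl⟩ := Set.mem_add.mp hs
    have := ih x hx
    have := hA y hy
    have : (n+1) * g = n * g + g := by ring
    omega

lemma SpanN_pow (K : Type*) [Field K] {a b : ℕ} {A : Set ℕ}
    (hA : ∀ x ∈ A, x ≤ Nat.gcd a b) :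
    ∀ k, (SpanN K a b 1 A) ^ k = SpanN K a b k (SK A k) := by
  intro k
  induction k with
  | zero =>
    rw [pow_zero, SK_zero, SpanN, Set.image_singleton, Set.image_singleton]
    have h0 : expo a b 0 0 = 0 := by
      rw [expo]
      simp
    rw [h0, Ideal.one_eq_top]
    simp [monomial_zero']
  | succ n ih =>
    rw [pow_succ, ih,
      SpanN_mul K (fun u hu => SK_le (by simpa using hA) n u hu)
        (fun v hv => by simpa using hA v hv), ← SK_succ]

lemma hag {a b : ℕ} : Nat.gcd a b * (a / Nat.gcd a b) = a :=
  Nat.mul_div_cancel' (Nat.gcd_dvd_left a b)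
lemma hbg {a b : ℕ} : Nat.gcd a b * (b / Nat.gcd a b) = b :=
  Nat.mul_div_cancel' (Nat.gcd_dvd_right a b)

lemma IA_eq (K : Type*) [Field K] (a b : ℕ) (A : Finset ℕ) :
    IA K a b A = SpanN K a b 1 (A : Set ℕ) := by
  rw [IA, SpanN, Set.image_image]
  congr 1
  apply Set.image_congr
  intro i _
  rw [mono_eq, expo]
  congr 1
  rw [one_mul, Nat.sub_mul, hbg]

lemma Jab_eq (K : Type*) [Field K] (a b k : ℕ) :
    Jab K (k*a) (k*b) = SpanN K a b k ({0, k * Nat.gcd a b} : Set ℕ) := by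
  rw [Jab, SpanN, Set.image_image]
  have h1 : (fun x => monomial (expo a b k x) (1:K)) '' {0, k * Nat.gcd a b} =
      {monomial (expo a b k 0) 1, monomial (expo a b k (k * Nat.gcd a b)) 1} := by
    rw [Set.image_insert_eq, Set.image_singleton]
  rw [h1]
  have e0 : expo a b k 0 = Finsupp.single 0 0 + Finsupp.single 1 (k*b) := by
    rw [expo]
    congr 1
    · simp
    · rw [Nat.sub_zero, mul_assoc, hbg]
  have e1 : expo a b k (k * Nat.gcd a b) =
      Finsupp.single 0 (k*a) + Finsupp.single 1 0 := by
    rw [expo]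
    congr 1
    · rw [mul_assoc, hag]
    · rw [Nat.sub_self, zero_mul]
  rw [e0, e1, ← mono_eq, ← mono_eq, Set.pair_comm]

lemma gen_mem_SpanN (K : Type*) [Field K] {a b N u : ℕ} {U : Set ℕ} (hu : u ∈ U) :
    monomial (expo a b N u) (1:K) ∈ SpanN K a b N U :=
  Ideal.subset_span ⟨expo a b N u, ⟨u, hu, rfl⟩, rfl⟩

lemma SpanN_subset_iff (K : Type*) [Field K] {a b : ℕ}
    (hα : 0 < a / Nat.gcd a b) (hβ : 0 < b / Nat.gcd a b) {N : ℕ} {U V : Set ℕ}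
    (hU : ∀ u ∈ U, u ≤ N * Nat.gcd a b) (hV : ∀ v ∈ V, v ≤ N * Nat.gcd a b)
    (h : SpanN K a b N U ≤ SpanN K a b N V) : U ⊆ V := by
  intro u hu
  have hm : monomial (expo a b N u) (1:K) ∈ SpanN K a b N V := h (gen_mem_SpanN K hu)
  rw [SpanN] at hm
  have := mem_ideal_span_monomial_image.mp hm (expo a b N u) ?_
  · obtain ⟨si, ⟨v, hv, rfl⟩, hle⟩ := this
    rwa [expo_le_same hα hβ (hU u hu) (hV v hv) hle] at hv
  · rw [mem_support_iff, coeff_monomial, if_pos rfl]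
    exact one_ne_zero

lemma SpanN_eq_iff (K : Type*) [Field K] {a b : ℕ}
    (hα : 0 < a / Nat.gcd a b) (hβ : 0 < b / Nat.gcd a b) {N : ℕ} {U V : Set ℕ}
    (hU : ∀ u ∈ U, u ≤ N * Nat.gcd a b) (hV : ∀ v ∈ V, v ≤ N * Nat.gcd a b) :
    SpanN K a b N U = SpanN K a b N V ↔ U = V := by
  constructor
  · intro h
    exact Set.Subset.antisymm (SpanN_subset_iff K hα hβ hU hV h.le)
      (SpanN_subset_iff K hα hβ hV hU h.ge)
  · rintro rfl; rfl

/-- The combinatorial counterpart of "reduction number of `I_A^k` is 1". -/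
def CC (A : Finset ℕ) (g k : ℕ) : Prop :=
  SK (↑A) (2*k) = ({0, k * g} : Set ℕ) + SK (↑A) k ∧
    SK (↑A) k ≠ ({0, k * g} : Set ℕ)

lemma P_iff_C (K : Type*) [Field K] (a b : ℕ) (ha : 0 < a) (hb : 0 < b)
    (A : Finset ℕ) (hA2 : ∀ x ∈ A, x ≤ Nat.gcd a b) (k : ℕ) :
    ((IA K a b A ^ k) ^ 2 = Jab K (k * a) (k * b) * IA K a b A ^ k ∧
        IA K a b A ^ k ≠ Jab K (k * a) (k * b)) ↔ CC A (Nat.gcd a b) k := by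
  have hgpos : 0 < Nat.gcd a b := Nat.pos_of_ne_zero (fun h => by
    rw [Nat.gcd_eq_zero_iff] at h; omega)
  have hα : 0 < a / Nat.gcd a b :=
    Nat.div_pos (Nat.le_of_dvd ha (Nat.gcd_dvd_left a b)) hgpos
  have hβ : 0 < b / Nat.gcd a b :=
    Nat.div_pos (Nat.le_of_dvd hb (Nat.gcd_dvd_right a b)) hgpos
  have hAb : ∀ x ∈ (A : Set ℕ), x ≤ Nat.gcd a b := by simpa using hA2
  have hSKk : ∀ s ∈ SK (↑A) k, s ≤ k * Nat.gcd a b := SK_le hAb k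
  have hSK2k : ∀ s ∈ SK (↑A) (2*k), s ≤ (2*k) * Nat.gcd a b := SK_le hAb (2*k)
  have hpair : ∀ u ∈ ({0, k * Nat.gcd a b} : Set ℕ), u ≤ k * Nat.gcd a b := by
    rintro u (rfl | rfl) <;> simp
  have hsum : ∀ u ∈ ({0, k * Nat.gcd a b} : Set ℕ) + SK (↑A) k,
      u ≤ (2*k) * Nat.gcd a b := by
    rintro u hu
    obtain ⟨x, hx, y, hy, rfl⟩ := Set.mem_add.mp hu
    have := hpair x hx
    have := hSKk y hy
    have : 2 * k * Nat.gcd a b = k * Nat.gcd a b + k * Nat.gcd a b := by ring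
    omega
  have hpow2 : (IA K a b A ^ k) ^ 2 = IA K a b A ^ (2*k) := by
    rw [← pow_mul, mul_comm]
  have hIA : ∀ m : ℕ, IA K a b A ^ m = SpanN K a b m (SK (↑A) m) := fun m => by
    rw [IA_eq, SpanN_pow K hAb m]
  have hRHS : Jab K (k * a) (k * b) * IA K a b A ^ k =
      SpanN K a b (2*k) (({0, k * Nat.gcd a b} : Set ℕ) + SK (↑A) k) := by
    rw [Jab_eq, hIA k, SpanN_mul K hpair hSKk, two_mul]
  constructor
  · rintro ⟨h1, h2⟩
    constructor
    · rw [hpow2, hIA, hRHS] at h1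
      exact (SpanN_eq_iff K hα hβ hSK2k hsum).mp h1
    · intro hc
      apply h2
      rw [hIA k, Jab_eq]
      rw [SpanN_eq_iff K hα hβ hSKk hpair]
      exact hc
  · rintro ⟨h1, h2⟩
    constructor
    · rw [hpow2, hIA, hRHS]
      rw [SpanN_eq_iff K hα hβ hSK2k hsum]
      exact h1
    · intro hc
      apply h2
      rw [hIA k, Jab_eq] at hc
      exact (SpanN_eq_iff K hα hβ hSKk hpair).mp hc

lemma zero_mem_SK {A : Set ℕ} (h0 : (0:ℕ) ∈ A) : ∀ k, (0:ℕ) ∈ SK A k := by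
  intro k
  induction k with
  | zero => exact rfl
  | succ n ih => rw [SK_succ]; simpa using Set.add_mem_add ih h0

lemma SK_one {A : Set ℕ} : SK A 1 = A := by
  rw [SK_succ, SK_zero, Set.singleton_zero, zero_add]

lemma SK_add {A : Set ℕ} (m : ℕ) : ∀ n, SK A (m + n) = SK A m + SK A n := by
  intro n
  induction n with
  | zero => rw [Nat.add_zero, SK_zero, Set.singleton_zero, add_zero]
  | succ n ih => rw [← Nat.add_assoc, SK_succ, SK_succ, ih, add_assoc]

lemma SK_mono {A : Set ℕ} (h0 : (0:ℕ) ∈ A) {m n : ℕ} (h : m ≤ n) :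
    SK A m ⊆ SK A n := by
  intro s hs
  obtain ⟨j, rfl⟩ := Nat.exists_eq_add_of_le h
  rw [SK_add]
  simpa using Set.add_mem_add hs (zero_mem_SK h0 j)

lemma mul_mem_SK {A : Set ℕ} {x : ℕ} (hx : x ∈ A) : ∀ c, c * x ∈ SK A c := by
  intro c
  induction c with
  | zero => rw [Nat.zero_mul]; exact rfl
  | succ n ih =>
    rw [SK_succ]
    have : (n+1) * x = n * x + x := by ring
    rw [this]
    exact Set.add_mem_add ih hx

lemma gcd_dvd_mem_SK {A : Finset ℕ} : ∀ k, ∀ s ∈ SK (↑A) k, A.gcd id ∣ s := by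
  intro k
  induction k with
  | zero => intro s hs; rw [SK_zero, Set.mem_singleton_iff] at hs; simp [hs]
  | succ n ih =>
    intro s hs
    rw [SK_succ] at hs
    obtain ⟨x, hx, y, hy, rfl⟩ := Set.mem_add.mp hs
    exact dvd_add (ih x hx) (Finset.gcd_dvd (by exact_mod_cast hy))

lemma one_mem_SK_imp {A : Finset ℕ} : ∀ k, (1:ℕ) ∈ SK (↑A) k → 1 ∈ A := by
  intro k
  induction k with
  | zero => intro h; rw [SK_zero, Set.mem_singleton_iff] at h; omega
  | succ n ih =>
    intro h
    rw [SK_succ] at h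
    obtain ⟨x, hx, y, hy, hxy⟩ := Set.mem_add.mp h
    rcases Nat.eq_zero_or_pos y with hy0 | hy1
    · subst hy0; rw [Nat.add_zero] at hxy; exact ih (hxy ▸ hx)
    · have : y = 1 := by omega
      subst this; exact_mod_cast hy

lemma top_mem_SK_imp {A : Finset ℕ} {g : ℕ} (hg : 2 ≤ g)
    (hbd : ∀ x ∈ A, x ≤ g) :
    ∀ k n, n ∈ SK (↑A) k → n + 1 = k * g → g - 1 ∈ A := by
  intro k
  induction k with
  | zero =>
    intro n hn h
    rw [SK_zero, Set.mem_singleton_iff] at hn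
    omega
  | succ m ih =>
    intro n hn h
    rw [SK_succ] at hn
    obtain ⟨x, hx, y, hy, rfl⟩ := Set.mem_add.mp hn
    have hyA : y ∈ A := by exact_mod_cast hy
    have hyg : y ≤ g := hbd y hyA
    have hxle : x ≤ m * g := SK_le (fun z hz => hbd z (by exact_mod_cast hz)) m x hx
    have hsucc : (m+1) * g = m * g + g := by ring
    rcases Nat.lt_or_ge y g with hlt | hge
    · have : y = g - 1 := by set M := m * g; omega
      exact this ▸ hyA
    · have hyg' : y = g := le_antisymm hyg hge
      apply ih x
      · exact hx
      · set M := m * g; omega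

section Closed

variable {M : ℕ} {R : Set (ZMod M)}

lemma nsmul_mem_closed (h0 : (0:ZMod M) ∈ R)
    (hadd : ∀ x ∈ R, ∀ y ∈ R, x + y ∈ R) :
    ∀ (n : ℕ), ∀ x ∈ R, n • x ∈ R := by
  intro n
  induction n with
  | zero => intro x _; rw [zero_nsmul]; exact h0
  | succ n ih => intro x hx; rw [succ_nsmul]; exact hadd _ (ih x hx) _ hx

lemma neg_mem_closed (hM : M ≠ 0) (h0 : (0:ZMod M) ∈ R)
    (hadd : ∀ x ∈ R, ∀ y ∈ R, x + y ∈ R) :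
    ∀ x ∈ R, -x ∈ R := by
  haveI : NeZero M := ⟨hM⟩
  intro x hx
  have hord : 0 < addOrderOf x := addOrderOf_pos x
  have h1 : addOrderOf x • x = 0 := addOrderOf_nsmul_eq_zero x
  have h2 : (addOrderOf x - 1) • x + x = 0 := by
    rw [← succ_nsmul, Nat.sub_add_cancel hord, h1]
  have h3 : -x = (addOrderOf x - 1) • x := neg_eq_of_add_eq_zero_left h2
  rw [h3]
  exact nsmul_mem_closed h0 hadd _ x hx

lemma zsmul_mem_closed (hM : M ≠ 0) (h0 : (0:ZMod M) ∈ R)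
    (hadd : ∀ x ∈ R, ∀ y ∈ R, x + y ∈ R) :
    ∀ (n : ℤ), ∀ x ∈ R, n • x ∈ R := by
  rintro (m | m) x hx
  · rw [Int.ofNat_eq_coe, natCast_zsmul]
    exact nsmul_mem_closed h0 hadd m x hx
  · rw [negSucc_zsmul]
    exact neg_mem_closed hM h0 hadd _ (nsmul_mem_closed h0 hadd _ x hx)

lemma gcd_mem_closed (hM : M ≠ 0) (h0 : (0:ZMod M) ∈ R)
    (hadd : ∀ x ∈ R, ∀ y ∈ R, x + y ∈ R) (B : Finset ℕ)
    (hB : ∀ x ∈ B, ((x:ℕ) : ZMod M) ∈ R) :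
    ((B.gcd id : ℕ) : ZMod M) ∈ R := by
  classical
  induction B using Finset.induction_on with
  | empty => simpa using h0
  | @insert x s hnot ih =>
    rw [Finset.gcd_insert]
    have hx : ((x:ℕ) : ZMod M) ∈ R := hB x (Finset.mem_insert_self x s)
    have hd : ((s.gcd id : ℕ) : ZMod M) ∈ R :=
      ih (fun y hy => hB y (Finset.mem_insert_of_mem hy))
    have key : ((gcd (id x) (s.gcd id) : ℕ) : ZMod M) =
        (Nat.gcdA x (s.gcd id)) • ((x:ℕ) : ZMod M) +
          (Nat.gcdB x (s.gcd id)) • ((s.gcd id : ℕ) : ZMod M) := by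
      have hbez := Nat.gcd_eq_gcd_ab x (s.gcd id)
      have : ((Nat.gcd x (s.gcd id) : ℤ) : ZMod M) =
          ((x * Nat.gcdA x (s.gcd id) + (s.gcd id) * Nat.gcdB x (s.gcd id) : ℤ) : ZMod M) := by
        rw [← hbez]
      rw [gcd_eq_nat_gcd, id]
      push_cast at this ⊢
      rw [this, zsmul_eq_mul, zsmul_eq_mul]
      ring
    rw [key]
    exact hadd _ (zsmul_mem_closed hM h0 hadd _ _ hx)
      _ (zsmul_mem_closed hM h0 hadd _ _ hd)

end Closed

/-- `Full A g k` : the `k`-fold sumset is exactly the multiples of `gcd A` up to `k*g`. -/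
def Full (A : Finset ℕ) (g k : ℕ) : Prop :=
  ∀ n, n ∈ SK (↑A) k ↔ (A.gcd id ∣ n ∧ n ≤ k * g)

section Main

variable {A : Finset ℕ} {g k : ℕ}

lemma add_closed_of_CC (hC1 : SK (↑A) (2*k) = ({0, k*g} : Set ℕ) + SK (↑A) k)
    {s t : ℕ} (hs : s ∈ SK (↑A) k) (ht : t ∈ SK (↑A) k) :
    s + t ∈ SK (↑A) k ∨ ∃ q ∈ SK (↑A) k, s + t = k*g + q := by
  have h2 : s + t ∈ SK (↑A) (2*k) := by
    rw [two_mul, SK_add]; exact Set.add_mem_add hs ht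
  rw [hC1] at h2
  obtain ⟨p, hp, q, hq, hpq⟩ := Set.mem_add.mp h2
  simp only [Set.mem_insert_iff, Set.mem_singleton_iff] at hp
  rcases hp with rfl | rfl
  · left; rw [zero_add] at hpq; exact hpq ▸ hq
  · right; exact ⟨q, hq, hpq.symm⟩

lemma delta_pos (hg : 2 ≤ g) (hgA : g ∈ A) : 0 < A.gcd id := by
  rcases Nat.eq_zero_or_pos (A.gcd id) with h | h
  · have : A.gcd id ∣ g := Finset.gcd_dvd hgA
    rw [h] at this
    omega
  · exact h

lemma delta_lt (hg : 2 ≤ g) (h0A : (0:ℕ) ∈ A) (hgA : g ∈ A)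
    (hbd : ∀ x ∈ A, x ≤ g) (hk : 1 ≤ k)
    (hC2 : SK (↑A) k ≠ ({0, k*g} : Set ℕ)) : A.gcd id < k * g := by
  have hδg : A.gcd id ∣ g := Finset.gcd_dvd hgA
  have hδle : A.gcd id ≤ g := Nat.le_of_dvd (by omega) hδg
  have hgkg : g ≤ k * g := Nat.le_mul_of_pos_left g hk
  rcases lt_or_ge (A.gcd id) (k*g) with h | h
  · exact h
  exfalso
  have hδeq : A.gcd id = k * g := le_antisymm (le_trans hδle hgkg) h
  apply hC2
  ext n
  simp only [Set.mem_insert_iff, Set.mem_singleton_iff]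
  constructor
  · intro hn
    have hd : A.gcd id ∣ n := gcd_dvd_mem_SK k n hn
    have hle : n ≤ k * g := SK_le (fun z hz => hbd z (by exact_mod_cast hz)) k n hn
    rw [hδeq] at hd
    rcases Nat.eq_zero_or_pos n with h0 | hpos
    · left; exact h0
    · right; exact le_antisymm hle (Nat.le_of_dvd hpos hd)
  · rintro (rfl | rfl)
    · exact zero_mem_SK (by exact_mod_cast h0A) k
    · exact mul_mem_SK (by exact_mod_cast hgA) k

lemma delta_mem_SK (hg : 2 ≤ g) (h0A : (0:ℕ) ∈ A) (hgA : g ∈ A)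
    (hbd : ∀ x ∈ A, x ≤ g) (hk : 1 ≤ k)
    (hC1 : SK (↑A) (2*k) = ({0, k*g} : Set ℕ) + SK (↑A) k)
    (hC2 : SK (↑A) k ≠ ({0, k*g} : Set ℕ)) : A.gcd id ∈ SK (↑A) k := by
  set M := k * g with hM
  have hMne : M ≠ 0 := by
    have : 1 * 2 ≤ k * g := Nat.mul_le_mul hk hg
    omega
  have hδlt : A.gcd id < M := delta_lt hg h0A hgA hbd hk hC2
  have hδpos : 0 < A.gcd id := delta_pos hg hgA
  set R : Set (ZMod M) := {z : ZMod M | ∃ s ∈ SK (↑A) k, ((s:ℕ) : ZMod M) = z} with hR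
  have h0R : (0 : ZMod M) ∈ R := ⟨0, zero_mem_SK (by exact_mod_cast h0A) k, Nat.cast_zero⟩
  have haddR : ∀ x ∈ R, ∀ y ∈ R, x + y ∈ R := by
    rintro x ⟨s, hs, rfl⟩ y ⟨t, ht, rfl⟩
    rcases add_closed_of_CC hC1 hs ht with hmem | ⟨q, hq, hq'⟩
    · exact ⟨s + t, hmem, by push_cast; ring⟩
    · refine ⟨q, hq, ?_⟩
      have : ((s + t : ℕ) : ZMod M) = ((M + q : ℕ) : ZMod M) := by rw [hq']
      rw [Nat.cast_add, Nat.cast_add, ZMod.natCast_self, zero_add] at this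
      exact this.symm
  have hBR : ∀ x ∈ A, ((x:ℕ) : ZMod M) ∈ R := by
    intro x hx
    refine ⟨x, ?_, rfl⟩
    have hx1 : x ∈ SK (↑A) 1 := by rw [SK_one]; exact_mod_cast hx
    exact SK_mono (by exact_mod_cast h0A) hk hx1
  have hgcdR : ((A.gcd id : ℕ) : ZMod M) ∈ R := gcd_mem_closed hMne h0R haddR A hBR
  obtain ⟨s, hs, hcast⟩ := hgcdR
  have hsle : s ≤ M := SK_le (fun z hz => hbd z (by exact_mod_cast hz)) k s hs
  have hmod : s % M = A.gcd id % M := by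
    have := (ZMod.natCast_eq_natCast_iff s (A.gcd id) M).mp hcast
    exact this
  have hδmod : A.gcd id % M = A.gcd id := Nat.mod_eq_of_lt hδlt
  rcases lt_or_eq_of_le hsle with hlt | rfl
  · have : s = A.gcd id := by rw [Nat.mod_eq_of_lt hlt] at hmod; omega
    exact this ▸ hs
  · rw [Nat.mod_self] at hmod
    omega

lemma multiples_mem_SK (hg : 2 ≤ g) (h0A : (0:ℕ) ∈ A) (hgA : g ∈ A)
    (hδSK : A.gcd id ∈ SK (↑A) k)
    (hC1 : SK (↑A) (2*k) = ({0, k*g} : Set ℕ) + SK (↑A) k) :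
    ∀ m, m * A.gcd id ≤ k * g → m * A.gcd id ∈ SK (↑A) k := by
  intro m
  induction m with
  | zero => intro _; rw [Nat.zero_mul]; exact zero_mem_SK (by exact_mod_cast h0A) k
  | succ m ih =>
    intro hle
    have hstep : (m+1) * A.gcd id = m * A.gcd id + A.gcd id := by ring
    have hmle : m * A.gcd id ≤ k * g := by
      refine le_trans ?_ hle
      exact Nat.mul_le_mul_right _ (Nat.le_succ m)
    rcases add_closed_of_CC hC1 (ih hmle) hδSK with hmem | ⟨q, hq, hq'⟩
    · rw [hstep]; exact hmem
    · rw [hstep] at hle ⊢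
      have hq0 : q = 0 := by omega
      have : m * A.gcd id + A.gcd id = k * g := by omega
      rw [this]
      exact mul_mem_SK (by exact_mod_cast hgA) k

lemma CC_to_Full (hg : 2 ≤ g) (h0A : (0:ℕ) ∈ A) (hgA : g ∈ A)
    (hbd : ∀ x ∈ A, x ≤ g) (hk : 1 ≤ k) (hC : CC A g k) :
    Full A g k ∧ A.gcd id < k * g := by
  obtain ⟨hC1, hC2⟩ := hC
  have hδlt := delta_lt hg h0A hgA hbd hk hC2
  have hδSK := delta_mem_SK hg h0A hgA hbd hk hC1 hC2
  refine ⟨fun n => ⟨fun hn => ⟨gcd_dvd_mem_SK k n hn,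
    SK_le (fun z hz => hbd z (by exact_mod_cast hz)) k n hn⟩, ?_⟩, hδlt⟩
  rintro ⟨⟨c, rfl⟩, hle⟩
  rw [mul_comm]
  exact multiples_mem_SK hg h0A hgA hδSK hC1 c (by rwa [mul_comm])

end Main

section Main2

variable {A : Finset ℕ} {g k : ℕ}

lemma Full_to_CC (hg : 2 ≤ g) (h0A : (0:ℕ) ∈ A) (hgA : g ∈ A)
    (hbd : ∀ x ∈ A, x ≤ g) (hk : 1 ≤ k) (hF : Full A g k)
    (hδ : A.gcd id < k * g) : CC A g k := by
  have hbd' : ∀ z ∈ (↑A : Set ℕ), z ≤ g := fun z hz => hbd z (by exact_mod_cast hz)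
  have h0A' : (0:ℕ) ∈ (↑A : Set ℕ) := by exact_mod_cast h0A
  have hgA' : (g:ℕ) ∈ (↑A : Set ℕ) := by exact_mod_cast hgA
  have hδg : A.gcd id ∣ k * g := Dvd.dvd.mul_left (Finset.gcd_dvd hgA) k
  have h2kg : 2*k*g = k*g + k*g := by ring
  constructor
  · ext n
    simp only [Set.mem_add, Set.mem_insert_iff, Set.mem_singleton_iff]
    constructor
    · intro hn
      have hd : A.gcd id ∣ n := gcd_dvd_mem_SK (2*k) n hn
      have hle : n ≤ 2*k*g := SK_le hbd' (2*k) n hn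
      rcases le_or_gt n (k*g) with h | h
      · exact ⟨0, Or.inl rfl, n, hF n |>.mpr ⟨hd, h⟩, by omega⟩
      · refine ⟨k*g, Or.inr rfl, n - k*g, hF _ |>.mpr ⟨Nat.dvd_sub hd hδg, by omega⟩, by omega⟩
    · rintro ⟨p, hp, q, hq, rfl⟩
      have hq2 : q ∈ SK (↑A) (2*k) := SK_mono h0A' (by omega) hq
      rcases hp with rfl | rfl
      · rwa [zero_add]
      · have : k*g ∈ SK (↑A) k := mul_mem_SK hgA' k
        rw [two_mul, SK_add]
        exact Set.add_mem_add this hq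
  · intro hEq
    have hδA : A.gcd id ∈ SK (↑A) k := hF _ |>.mpr ⟨dvd_refl _, hδ.le⟩
    rw [hEq] at hδA
    have hδpos := delta_pos hg hgA
    simp only [Set.mem_insert_iff, Set.mem_singleton_iff] at hδA
    omega

lemma Full_succ (h0A : (0:ℕ) ∈ A) (hgA : g ∈ A) (hbd : ∀ x ∈ A, x ≤ g)
    (hg : 2 ≤ g) (hk : 1 ≤ k) (hF : Full A g k) : Full A g (k+1) := by
  have hbd' : ∀ z ∈ (↑A : Set ℕ), z ≤ g := fun z hz => hbd z (by exact_mod_cast hz)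
  have h0A' : (0:ℕ) ∈ (↑A : Set ℕ) := by exact_mod_cast h0A
  have hgA' : (g:ℕ) ∈ (↑A : Set ℕ) := by exact_mod_cast hgA
  have hsucc : (k+1)*g = k*g + g := by ring
  have hgkg : g ≤ k * g := Nat.le_mul_of_pos_left g hk
  intro n
  constructor
  · intro hn
    exact ⟨gcd_dvd_mem_SK (k+1) n hn, SK_le hbd' (k+1) n hn⟩
  · rintro ⟨hd, hle⟩
    rcases le_or_gt n (k*g) with h | h
    · exact SK_mono h0A' (Nat.le_succ k) (hF n |>.mpr ⟨hd, h⟩)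
    · have hng : n - g ∈ SK (↑A) k :=
        hF _ |>.mpr ⟨Nat.dvd_sub hd (Finset.gcd_dvd hgA), by omega⟩
      rw [SK_succ]
      have : n = (n - g) + g := by omega
      rw [this]
      exact Set.add_mem_add hng hgA'

lemma cover (hg : 2 ≤ g) (h0A : (0:ℕ) ∈ A) (h1A : (1:ℕ) ∈ A)
    (hg1A : g - 1 ∈ A) (hgA : g ∈ A) (hbd : ∀ x ∈ A, x ≤ g)
    (hk1 : 1 ≤ k) (hk2 : g - 2 ≤ k) : Full A g k := by
  have hbd' : ∀ z ∈ (↑A : Set ℕ), z ≤ g := fun z hz => hbd z (by exact_mod_cast hz)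
  have h0A' : (0:ℕ) ∈ (↑A : Set ℕ) := by exact_mod_cast h0A
  have h1A' : (1:ℕ) ∈ (↑A : Set ℕ) := by exact_mod_cast h1A
  have hg1A' : (g - 1 : ℕ) ∈ (↑A : Set ℕ) := by exact_mod_cast hg1A
  have hgA' : (g:ℕ) ∈ (↑A : Set ℕ) := by exact_mod_cast hgA
  intro n
  refine ⟨fun hn => ⟨gcd_dvd_mem_SK k n hn, SK_le hbd' k n hn⟩, ?_⟩
  rintro ⟨-, hle⟩
  set q := n / g with hqdef
  set r := n % g with hrdef
  have hdm : g * q + r = n := Nat.div_add_mod n g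
  have hr : r < g := Nat.mod_lt n (by omega)
  have hq : q ≤ k := by
    have h1 : n / g ≤ k * g / g := Nat.div_le_div_right hle
    rwa [Nat.mul_div_cancel k (by omega : 0 < g)] at h1
  by_cases hc : q + r ≤ k
  · have h1 : q * g ∈ SK (↑A) q := mul_mem_SK hgA' q
    have h2 : r * 1 ∈ SK (↑A) r := mul_mem_SK h1A' r
    have h3 : q * g + r * 1 ∈ SK (↑A) (q + r) := by
      rw [SK_add]; exact Set.add_mem_add h1 h2
    have hn' : n = q * g + r * 1 := by rw [mul_one, mul_comm q g]; omega
    rw [hn']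
    exact SK_mono h0A' hc h3
  · push_neg at hc
    have hr1 : 1 ≤ r := by omega
    have hqk : q < k := by
      rcases lt_or_eq_of_le hq with h | h
      · exact h
      · exfalso
        rw [h] at hdm
        have : g * k = k * g := mul_comm g k
        omega
    set m := q + r + 1 - g with hm
    set t := g - r with ht
    have hmt : m + t = q + 1 := by omega
    have hid : m * g + t * (g-1) = n := by
      have e1 : t * g = t * (g-1) + t := by
        conv_lhs => rw [show g = (g-1)+1 by omega]
        rw [mul_add, mul_one]
      have e2 : (m + t) * g = m * g + t * g := add_mul m t g
      have e3 : (q + 1) * g = q * g + g := by ring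
      have e4 : (m + t) * g = (q + 1) * g := by rw [hmt]
      have e5 : g * q = q * g := mul_comm g q
      omega
    have h1 : m * g ∈ SK (↑A) m := mul_mem_SK hgA' m
    have h2 : t * (g-1) ∈ SK (↑A) t := mul_mem_SK hg1A' t
    have h3 : m * g + t * (g-1) ∈ SK (↑A) (m + t) := by
      rw [SK_add]; exact Set.add_mem_add h1 h2
    have hn' : n = m * g + t * (g-1) := hid.symm
    rw [hn']
    exact SK_mono h0A' (by omega) h3

end Main2

theorem stmt17 (K : Type*) [Field K] (a b : ℕ) (ha : 0 < a) (hb : 0 < b)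
    (hg : 2 ≤ Nat.gcd a b) (A : Finset ℕ)
    (hA1 : ({0, Nat.gcd a b} : Finset ℕ) ⊆ A)
    (hA2 : A ⊆ Finset.range (Nat.gcd a b + 1)) :
    let g := Nat.gcd a b
    -- `P k` says: the reduction number of `I_A^k` with respect to
    -- `(x^{ka}, y^{kb})` equals `1`.
    let P : ℕ → Prop := fun k =>
      (IA K a b A ^ k) ^ 2 = Jab K (k * a) (k * b) * IA K a b A ^ k ∧
        IA K a b A ^ k ≠ Jab K (k * a) (k * b)
    (A.gcd id = 1 →
      ((∃ k, 1 ≤ k ∧ P k) ↔ ({0, 1, g - 1, g} : Finset ℕ) ⊆ A)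
      ∧ ((∃ k, 1 ≤ k ∧ P k) ↔ ∀ k, max 1 (g - 2) ≤ k → P k))
    ∧ ∀ k₀ k : ℕ, 1 ≤ k₀ → k₀ ≤ k → P k₀ → P k := by
  intro g P
  have h0A : (0:ℕ) ∈ A := hA1 (Finset.mem_insert_self 0 {Nat.gcd a b})
  have hgA : g ∈ A := hA1 (by simp [g])
  have hbd : ∀ x ∈ A, x ≤ g := fun x hx =>
    Nat.lt_succ_iff.mp (Finset.mem_range.mp (hA2 hx))
  have hg2 : 2 ≤ g := hg
  have hPC : ∀ k, P k ↔ CC A g k := fun k => P_iff_C K a b ha hb A hbd k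
  constructor
  · intro hδ1
    have hab : (∃ k, 1 ≤ k ∧ P k) → ({0, 1, g-1, g} : Finset ℕ) ⊆ A := by
      rintro ⟨k, hk, hPk⟩
      have hC := (hPC k).mp hPk
      obtain ⟨hF, -⟩ := CC_to_Full hg2 h0A hgA hbd hk hC
      have hkg2 : 2 ≤ k * g := le_trans hg2 (Nat.le_mul_of_pos_left g hk)
      have h1SK : (1:ℕ) ∈ SK (↑A) k :=
        (hF 1).mpr ⟨by rw [hδ1], by omega⟩
      have h1A : (1:ℕ) ∈ A := one_mem_SK_imp k h1SK
      have htop : k*g - 1 ∈ SK (↑A) k :=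
        (hF _).mpr ⟨by rw [hδ1]; exact one_dvd _, by omega⟩
      have hg1A : g - 1 ∈ A := top_mem_SK_imp hg2 hbd k (k*g-1) htop (by omega)
      simp only [Finset.insert_subset_iff, Finset.singleton_subset_iff]
      exact ⟨h0A, h1A, hg1A, hgA⟩
    have hbc : ({0,1,g-1,g} : Finset ℕ) ⊆ A → ∀ k, max 1 (g-2) ≤ k → P k := by
      intro hsub k hk
      rw [max_le_iff] at hk
      have h1A : (1:ℕ) ∈ A := hsub (by simp)
      have hg1A : g - 1 ∈ A := hsub (by simp)
      have hF := cover hg2 h0A h1A hg1A hgA hbd hk.1 hk.2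
      have hδlt : A.gcd id < k * g := by
        have := le_trans hg2 (Nat.le_mul_of_pos_left g hk.1)
        rw [hδ1]; omega
      exact (hPC k).mpr (Full_to_CC hg2 h0A hgA hbd hk.1 hF hδlt)
    have hca : (∀ k, max 1 (g-2) ≤ k → P k) → ∃ k, 1 ≤ k ∧ P k :=
      fun h => ⟨max 1 (g-2), le_max_left _ _, h _ le_rfl⟩
    exact ⟨⟨hab, fun hb => hca (hbc hb)⟩, ⟨fun h => hbc (hab h), hca⟩⟩
  · intro k₀ k hk₀ hk hP
    have hC₀ := (hPC k₀).mp hP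
    obtain ⟨hF₀, hδlt₀⟩ := CC_to_Full hg2 h0A hgA hbd hk₀ hC₀
    have hFk : Full A g k := by
      induction k, hk using Nat.le_induction with
      | base => exact hF₀
      | succ n hn ih => exact Full_succ h0A hgA hbd hg2 (by omega) ih
    have hδltk : A.gcd id < k*g :=
      lt_of_lt_of_le hδlt₀ (Nat.mul_le_mul_right g hk)
    exact (hPC k).mpr (Full_to_CC hg2 h0A hgA hbd (le_trans hk₀ hk) hFk hδltk)
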